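/- Let H be a complex Hilbert space with inner product ⟨·,·⟩ linear in the first and conjugate-linear in the second argument, let C : H → H be a bounded linear operator, and u ∈ H. Suppose that for each p < 0 we are given: a real number σ(p) > 0, a complex number λ(p) with Re λ(p) < 0, a bounded linear operator A_p : H → H with A_p u = λ(p)·u and (A_p)* u = conj(λ(p))·u, and a bounded linear operator V_p : H → H satisfying the Lyapunov equation for (A_p, C, σ(p)). Then for each p < 0, ⟨V_p u, u⟩ = −σ(p)²·⟨C u, u⟩/(2·Re λ(p)). Consequently, if the limit Ξ := lim_{p→0⁻} σ(p)²/(−2·Re λ(p)) exists in ℝ, then lim_{p→0⁻} ⟨V_p u, u⟩ = Ξ·⟨C u, u⟩. -/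

import Mathlib

open ContinuousLinearMap Filter Topology

/-- The paper's inner product `⟨x, y⟩` (linear in the first argument,
conjugate-linear in the second) equals Mathlib's `inner y x`. -/
local notation "⟪" x ", " y "⟫" => @inner ℂ _ _ x y

/-- `V` satisfies the Lyapunov equation for `(A, C, σ)`. -/
def LyapunovEq {H : Type*} [NormedAddCommGroup H] [InnerProductSpace ℂ H]
    [CompleteSpace H] (A C : H →L[ℂ] H) (σ : ℝ) (V : H →L[ℂ] H) : Prop :=
  ∀ g h : H, ⟪h, A (V g)⟫ + ⟪h, V (adjoint A g)⟫ = -(σ ^ 2 : ℂ) * ⟪h, C g⟫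

theorem statement5 {H : Type*} [NormedAddCommGroup H] [InnerProductSpace ℂ H]
    [CompleteSpace H] (C : H →L[ℂ] H) (u : H)
    (σ : ℝ → ℝ) (lam : ℝ → ℂ) (A V : ℝ → H →L[ℂ] H)
    (hσ : ∀ p < (0 : ℝ), 0 < σ p)
    (hre : ∀ p < (0 : ℝ), (lam p).re < 0)
    (hA : ∀ p < (0 : ℝ), A p u = lam p • u)
    (hA' : ∀ p < (0 : ℝ), adjoint (A p) u = (starRingEnd ℂ) (lam p) • u)
    (hV : ∀ p < (0 : ℝ), LyapunovEq (A p) C (σ p) (V p)) :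
    (∀ p < (0 : ℝ), ⟪u, V p u⟫
        = -((σ p) ^ 2 : ℂ) * ⟪u, C u⟫ / (2 * ((lam p).re : ℂ))) ∧
    ∀ Ξ : ℝ, Tendsto (fun p => (σ p) ^ 2 / (-2 * (lam p).re)) (𝓝[<] (0 : ℝ)) (𝓝 Ξ) →
      Tendsto (fun p => ⟪u, V p u⟫) (𝓝[<] (0 : ℝ)) (𝓝 ((Ξ : ℂ) * ⟪u, C u⟫)) := by
  have key : ∀ p < (0 : ℝ), ⟪u, V p u⟫
      = -((σ p) ^ 2 : ℂ) * ⟪u, C u⟫ / (2 * ((lam p).re : ℂ)) := by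
    intro p hp
    have h1 := hV p hp u u
    rw [hA' p hp] at h1
    have e1 : ⟪u, (A p) ((V p) u)⟫ = lam p * ⟪u, (V p) u⟫ := by
      rw [← ContinuousLinearMap.adjoint_inner_left, hA' p hp, inner_smul_left,
        Complex.conj_conj]
    have e2 : ⟪u, (V p) ((starRingEnd ℂ) (lam p) • u)⟫
        = (starRingEnd ℂ) (lam p) * ⟪u, (V p) u⟫ := by
      rw [map_smul, inner_smul_right]
    rw [e1, e2] at h1
    have hsum : lam p + (starRingEnd ℂ) (lam p) = 2 * ((lam p).re : ℂ) := by
      rw [Complex.add_conj]; push_cast; ring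
    have h2 : (2 * ((lam p).re : ℂ)) * ⟪u, V p u⟫ = -((σ p) ^ 2 : ℂ) * ⟪u, C u⟫ := by
      rw [← hsum]; linear_combination h1
    have hne : (2 * ((lam p).re : ℂ)) ≠ 0 := by
      simp only [ne_eq, mul_eq_zero, Complex.ofReal_eq_zero]
      push_neg
      exact ⟨two_ne_zero, (hre p hp).ne⟩
    rw [eq_div_iff hne]
    linear_combination h2
  refine ⟨key, fun Ξ hΞ => ?_⟩
  have heq : ∀ᶠ p in 𝓝[<] (0 : ℝ), (((σ p) ^ 2 / (-2 * (lam p).re) : ℝ) : ℂ) * ⟪u, C u⟫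
      = ⟪u, V p u⟫ := by
    filter_upwards [self_mem_nhdsWithin] with p hp
    rw [key p hp]
    have hne : ((lam p).re : ℂ) ≠ 0 := by
      simpa using (hre p hp).ne
    push_cast
    field_simp
  have := ((Complex.continuous_ofReal.tendsto Ξ).comp hΞ).mul_const ⟪u, C u⟫
  exact this.congr' heq
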